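/- Let A be an m×n real matrix with restricted isometry constant δ_{2k} < 1, let h ∈ ℝⁿ be k-sparse, y ∈ ℝᵐ, and ν' = y − Ah. Let v ∈ ℝⁿ be a k-sparse vector with support Γ = supp(v), and suppose x⁺ ∈ ℝⁿ satisfies supp(x⁺) ⊆ Γ and [Aᵀ(y − A x⁺)]_Γ = 0 (i.e., x⁺ solves the least-squares problem min{‖y − Az‖₂² : supp(z) ⊆ Γ}). Then ‖h − x⁺‖₂ ≤ (1/√(1−δ_{2k}²))·‖h − v‖₂ + (1/(1−δ_{2k}))·‖ν'‖₂. -/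

import Mathlib

open Finset

noncomputable def nsq {ι : Type*} [Fintype ι] (x : ι → ℝ) : ℝ := ∑ i, (x i) ^ 2

noncomputable def n2 {ι : Type*} [Fintype ι] (x : ι → ℝ) : ℝ := Real.sqrt (nsq x)

noncomputable def supp {n : ℕ} (x : Fin n → ℝ) : Finset (Fin n) :=
  Finset.univ.filter (fun i => x i ≠ 0)

def Sparse {n : ℕ} (k : ℕ) (x : Fin n → ℝ) : Prop := (supp x).card ≤ k

def restr {n : ℕ} (x : Fin n → ℝ) (T : Finset (Fin n)) : Fin n → ℝ :=
  fun i => if i ∈ T then x i else 0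

def SatRIP {m n : ℕ} (A : Matrix (Fin m) (Fin n) ℝ) (q : ℕ) (δ : ℝ) : Prop :=
  ∀ z : Fin n → ℝ, Sparse q z →
    (1 - δ) * nsq z ≤ nsq (A.mulVec z) ∧ nsq (A.mulVec z) ≤ (1 + δ) * nsq z

/-- `δ` is the `q`-th order restricted isometry constant of `A`:
the smallest `δ' ≥ 0` such that `(1-δ')‖z‖² ≤ ‖Az‖² ≤ (1+δ')‖z‖²` for all `q`-sparse `z`. -/
def IsRIC {m n : ℕ} (A : Matrix (Fin m) (Fin n) ℝ) (q : ℕ) (δ : ℝ) : Prop :=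
  IsLeast {δ' : ℝ | 0 ≤ δ' ∧ SatRIP A q δ'} δ

/-- membership in `W^k`: binary vectors with exactly `k` entries equal to 1. -/
def InW {n : ℕ} (k : ℕ) (w : Fin n → ℝ) : Prop :=
  (∀ i, w i = 0 ∨ w i = 1) ∧ (Finset.univ.filter (fun i => w i = 1)).card = k

/-- membership in the polytope `P^k`. -/
def InP {n : ℕ} (k : ℕ) (w : Fin n → ℝ) : Prop :=
  (∑ i, w i) = (k : ℝ) ∧ ∀ i, 0 ≤ w i ∧ w i ≤ 1

/-- `S` is an index set of the `k` largest absolute entries of `x`. -/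
def IsTopK {n : ℕ} (x : Fin n → ℝ) (k : ℕ) (S : Finset (Fin n)) : Prop :=
  S.card = k ∧ ∀ i ∈ S, ∀ j ∉ S, |x j| ≤ |x i|

/-- `d` is a hard thresholding `H_k(z)` of `z`. -/
def IsHT {n : ℕ} (k : ℕ) (z d : Fin n → ℝ) : Prop :=
  Sparse k d ∧ ∀ d' : Fin n → ℝ, Sparse k d' → n2 (z - d) ≤ n2 (z - d')

/-- `w 0, …, w (ω-1)` are successive compression minimizers at `x^p` (with `u^p = up`). -/
def SCM {m n : ℕ} (A : Matrix (Fin m) (Fin n) ℝ) (y : Fin m → ℝ) (k ω : ℕ)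
    (up : Fin n → ℝ) (w : ℕ → Fin n → ℝ) : Prop :=
  ∀ j < ω, InP k (w j) ∧ ∀ v : Fin n → ℝ, InP k v →
    n2 (y - A.mulVec (up * (∏ l ∈ Finset.range j, w l) * w j)) ≤
    n2 (y - A.mulVec (up * (∏ l ∈ Finset.range j, w l) * v))

/-- the `ℓ∞` norm of `x` restricted to `T` (zero if `T` is empty). -/
noncomputable def linfT {n : ℕ} (x : Fin n → ℝ) (T : Finset (Fin n)) : ℝ :=
  if h : T.Nonempty then T.sup' h (fun j => |x j|) else 0


-- Auxiliary lemmas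

private lemma fact1_id (a c d S U : ℝ) (ha2 : a^2 = 1 - d) (hc2 : c^2 = 1 + d) :
    ((a*S+c*U)^2 - a^4*c^2*S^2)^2
      - (2*a*(a*U^2+d*S*U) + a^2*d^2*S^2) * ((a*S+c*U)^2 - a^4*c^2*S^2)
      + a^4*c^2*(a*U^2+d*S*U)^2
    = 2*d^2*a^3*(c-d)*(S^3*U)
      + (4 - 4*d^2 + 3*d^3 - 4*d^4 + d^5 - 4*d*(1-d)*c)*(S^2*U^2)
      + 2*a*c*d*(4 - d*c*(2-d))*(S*U^3)
      + d^2*(1+d)*(3-d)*U^4 := by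
  linear_combination
    ((-2:ℝ)*S^2*U^2 + S^4 + (2:ℝ)*d*S^2*U^2 + (-1:ℝ)*d*S^4 + (-1:ℝ)*d^2*S^4 + d^3*S^4 + (-4:ℝ)*c*d*S^2*U^2 + (-1:ℝ)*c^2*U^4 + (8:ℝ)*c^2*S^2*U^2 + (-2:ℝ)*c^2*S^4 + (-2:ℝ)*c^2*d*U^4 + (-4:ℝ)*c^2*d*S^2*U^2 + (4:ℝ)*c^2*d*S^4 + c^2*d^2*U^4 + (2:ℝ)*c^2*d^2*S^2*U^2 + (-1:ℝ)*c^2*d^2*S^4 + (-1:ℝ)*c^2*d^3*S^2*U^2 + (-2:ℝ)*c^2*d^3*S^4 + c^2*d^4*S^4 + (-2:ℝ)*c^4*S^2*U^2 + c^4*S^4 + (2:ℝ)*c^4*d*S^2*U^2 + (-3:ℝ)*c^4*d*S^4 + (3:ℝ)*c^4*d^2*S^4 + (-1:ℝ)*c^4*d^3*S^4 + (-2:ℝ)*a*d*S^3*U + (2:ℝ)*a*d^3*S^3*U + (-4:ℝ)*a*c*S*U^3 + (4:ℝ)*a*c*S^3*U + (-4:ℝ)*a*c*d^2*S^3*U +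 (2:ℝ)*a*c^2*d*S*U^3 + (2:ℝ)*a*c^2*d*S^3*U + (-2:ℝ)*a*c^2*d^2*S*U^3 + (-2:ℝ)*a*c^2*d^2*S^3*U + (-4:ℝ)*a*c^3*S^3*U + (4:ℝ)*a*c^3*d*S^3*U + (-2:ℝ)*a^2*S^2*U^2 + a^2*S^4 + (-1:ℝ)*a^2*d^2*S^4 + a^2*c^2*U^4 + (2:ℝ)*a^2*c^2*S^2*U^2 + (-2:ℝ)*a^2*c^2*S^4 + (-1:ℝ)*a^2*c^2*d*U^4 + (-2:ℝ)*a^2*c^2*d*S^2*U^2 + (2:ℝ)*a^2*c^2*d*S^4 + a^2*c^2*d^2*S^2*U^2 + a^2*c^2*d^2*S^4 + (-1:ℝ)*a^2*c^2*d^3*S^4 + (-2:ℝ)*a^2*c^4*S^2*U^2 + a^2*c^4*S^4 + (-2:ℝ)*a^2*c^4*d*S^4 + a^2*c^4*d^2*S^4 + (2:ℝ)*a^3*c^2*d*S*U^3 + (2:ℝ)*a^3*c^2*d*S^3*U + (-4:ℝ)*a^3*c^3*S^3*U + a^4*c^2*U^4 + (2:ℝ)*a^4*c^2*S^2*U^2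 + (-2:ℝ)*a^4*c^2*S^4 + a^4*c^2*d^2*S^4 + a^4*c^4*S^4 + (-1:ℝ)*a^4*c^4*d*S^4 + a^6*c^4*S^4) * ha2
    + ((6:ℝ)*S^2*U^2 + (-1:ℝ)*S^4 + (-10:ℝ)*d*S^2*U^2 + (3:ℝ)*d*S^4 + (3:ℝ)*d^2*U^4 + (8:ℝ)*d^2*S^2*U^2 + (-3:ℝ)*d^2*S^4 + (-1:ℝ)*d^3*U^4 + (-5:ℝ)*d^3*S^2*U^2 + d^3*S^4 + d^4*S^2*U^2 + c^2*U^4 + (-2:ℝ)*c^2*S^2*U^2 + c^2*S^4 + (4:ℝ)*c^2*d*S^2*U^2 + (-4:ℝ)*c^2*d*S^4 + (-2:ℝ)*c^2*d^2*S^2*U^2 + (6:ℝ)*c^2*d^2*S^4 + (-4:ℝ)*c^2*d^3*S^4 + c^2*d^4*S^4 + (2:ℝ)*a*d*S^3*U + (-4:ℝ)*a*d^2*S^3*U + (2:ℝ)*a*d^3*S^3*U + (4:ℝ)*a*c*S*U^3 + (-4:ℝ)*a*c*S^3*U + (8:ℝ)*a*c*d*S^3*U + (-4:ℝ)*a*c*d^2*S^3*U)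 * hc2

private lemma basic_ac (d a c : ℝ) (hd0 : 0 ≤ d) (hd1 : d ≤ 1)
    (ha0 : 0 < a) (hc0 : 0 < c) (ha2 : a^2 = 1 - d) (hc2 : c^2 = 1 + d) :
    1 ≤ c ∧ c ≤ 2 ∧ a ≤ 1 ∧ d ≤ c := by
  have h1 : 1 ≤ c := by nlinarith
  have h2 : c ≤ 2 := by nlinarith
  have h3 : a ≤ 1 := by nlinarith
  exact ⟨h1, h2, h3, le_trans hd1 h1⟩

private lemma fact2_ineq (d a c S U : ℝ) (hd0 : 0 ≤ d) (hd1 : d ≤ 1)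
    (ha0 : 0 < a) (hc0 : 0 < c) (ha2 : a^2 = 1 - d) (hc2 : c^2 = 1 + d)
    (hS : 0 ≤ S) (hU : 0 ≤ U) :
    (2*a*(a*U^2+d*S*U) + a^2*d^2*S^2) ≤ 2*((a*S+c*U)^2 - a^4*c^2*S^2) := by
  obtain ⟨hc1, hc2', ha1, hcd⟩ := basic_ac d a c hd0 hd1 ha0 hc0 ha2 hc2
  have eI2 : 2*((a*S+c*U)^2 - a^4*c^2*S^2) - (2*a*(a*U^2+d*S*U) + a^2*d^2*S^2)
      = a^2*d^2*S^2 + 2*a*(2*c-d)*S*U + 4*d*U^2 := by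
    linear_combination ((-2:ℝ)*U^2 + (2:ℝ)*S^2 + (-2:ℝ)*d^2*S^2 + (-2:ℝ)*c^2*S^2 + (2:ℝ)*c^2*d*S^2 + (-2:ℝ)*a^2*c^2*S^2) * ha2
      + ((2:ℝ)*U^2 + (-2:ℝ)*S^2 + (4:ℝ)*d*S^2 + (-2:ℝ)*d^2*S^2) * hc2
  have t1 : (0:ℝ) ≤ a^2*d^2*S^2 := by positivity
  have t2 : (0:ℝ) ≤ 2*a*(2*c-d)*S*U :=
    mul_nonneg (mul_nonneg (mul_nonneg (by linarith) (by linarith)) hS) hU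
  have t3 : (0:ℝ) ≤ 4*d*U^2 := by positivity
  linarith [eI2]

private lemma fact1_ineq (d a c S U : ℝ) (hd0 : 0 ≤ d) (hd1 : d ≤ 1)
    (ha0 : 0 < a) (hc0 : 0 < c) (ha2 : a^2 = 1 - d) (hc2 : c^2 = 1 + d)
    (hS : 0 ≤ S) (hU : 0 ≤ U) :
    0 ≤ ((a*S+c*U)^2 - a^4*c^2*S^2)^2
      - (2*a*(a*U^2+d*S*U) + a^2*d^2*S^2)*((a*S+c*U)^2 - a^4*c^2*S^2)
      + a^4*c^2*(a*U^2+d*S*U)^2 := by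
  obtain ⟨hc1, hc2', ha1, hcd⟩ := basic_ac d a c hd0 hd1 ha0 hc0 ha2 hc2
  have hN : (0:ℝ) ≤ 4 - 4*d^2 + 3*d^3 - 4*d^4 + d^5 - 4*d*(1-d)*c := by
    have eN : 4 - 4*d^2 + 3*d^3 - 4*d^4 + d^5 - 4*d*(1-d)*c
        = (1-d)*(4 - 2*d^2 + 3*d^3 - d^4) + 2*d*(1-d)*(c-1)^2 := by
      linear_combination (-2*d*(1-d)) * hc2
    have hd2 : d^2 ≤ 1 := by nlinarith
    have hd34 : (0:ℝ) ≤ d^3*(3-d) := mul_nonneg (by positivity) (by linarith)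
    have g1 : (0:ℝ) ≤ 4 - 2*d^2 + 3*d^3 - d^4 := by nlinarith [hd2, hd34]
    have g2 : (0:ℝ) ≤ (1-d)*(4 - 2*d^2 + 3*d^3 - d^4) := mul_nonneg (by linarith) g1
    have g3 : (0:ℝ) ≤ 2*d*(1-d)*(c-1)^2 :=
      mul_nonneg (mul_nonneg (by linarith) (by linarith)) (sq_nonneg _)
    linarith [eN]
  have h3c : (0:ℝ) ≤ 4 - d*c*(2-d) := by
    have hdc : d*c ≤ 2 := by nlinarith [mul_nonneg hd0 hc0.le]
    nlinarith [hdc, mul_nonneg (mul_nonneg hd0 hd0) hc0.le]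
  have e3 := fact1_id a c d S U ha2 hc2
  have n1 : (0:ℝ) ≤ 2*d^2*a^3*(c-d)*(S^3*U) :=
    mul_nonneg (mul_nonneg (by positivity) (by linarith)) (by positivity)
  have n2' : (0:ℝ) ≤ (4 - 4*d^2 + 3*d^3 - 4*d^4 + d^5 - 4*d*(1-d)*c)*(S^2*U^2) :=
    mul_nonneg hN (by positivity)
  have n3 : (0:ℝ) ≤ 2*a*c*d*(4 - d*c*(2-d))*(S*U^3) :=
    mul_nonneg (mul_nonneg (by positivity) h3c) (by positivity)
  have n4 : (0:ℝ) ≤ d^2*(1+d)*(3-d)*U^4 :=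
    mul_nonneg (mul_nonneg (mul_nonneg (sq_nonneg d) (by linarith)) (by linarith)) (by positivity)
  linarith [e3]

private lemma quad_le (K C t M : ℝ) (h5 : t^2 - K*t + C ≤ 0)
    (hF1 : 0 ≤ M^2 - K*M + C) (hF2 : K ≤ 2*M) : t ≤ M := by
  by_contra hcon
  push_neg at hcon
  nlinarith [mul_pos (sub_pos.2 hcon) (by linarith : (0:ℝ) < t + M - K)]

private lemma poly_main (d a c S U Q : ℝ) (hd0 : 0 ≤ d) (hd1 : d ≤ 1)
    (ha0 : 0 < a) (hc0 : 0 < c) (ha2 : a^2 = 1 - d) (hc2 : c^2 = 1 + d)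
    (hS : 0 ≤ S) (hU : 0 ≤ U) (hQ : 0 ≤ Q)
    (hyp : (a*Q - (a*U^2 + d*S*U))^2 ≤ a^2*d^2*Q*(Q+S^2)) :
    a^4*c^2*(Q+S^2) ≤ (a*S+c*U)^2 := by
  have hI1 : a^4*c^2*Q^2 - (2*a*(a*U^2+d*S*U) + a^2*d^2*S^2)*Q + (a*U^2+d*S*U)^2 ≤ 0 := by
    have eI1 : a^4*c^2*Q^2 - (2*a*(a*U^2+d*S*U) + a^2*d^2*S^2)*Q + (a*U^2+d*S*U)^2
        = (a*Q - (a*U^2 + d*S*U))^2 - a^2*d^2*Q*(Q+S^2) := by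
      linear_combination (-(Q^2 + (-1:ℝ)*d^2*Q^2 + (-1:ℝ)*c^2*Q^2 + c^2*d*Q^2 + (-1:ℝ)*a^2*c^2*Q^2)) * ha2
        + (-((-1:ℝ)*Q^2 + (2:ℝ)*d*Q^2 + (-1:ℝ)*d^2*Q^2)) * hc2
    rw [eI1]; linarith
  have hao : (0:ℝ) ≤ a^4*c^2 := by positivity
  have h5 : (a^4*c^2*Q)^2 - (2*a*(a*U^2+d*S*U) + a^2*d^2*S^2)*(a^4*c^2*Q)
      + a^4*c^2*(a*U^2+d*S*U)^2 ≤ 0 := by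
    have h := mul_le_mul_of_nonneg_left hI1 hao
    rw [mul_zero] at h
    linear_combination h
  have ht' : a^4*c^2*Q ≤ (a*S+c*U)^2 - a^4*c^2*S^2 :=
    quad_le _ _ _ _ h5 (fact1_ineq d a c S U hd0 hd1 ha0 hc0 ha2 hc2 hS hU)
      (fact2_ineq d a c S U hd0 hd1 ha0 hc0 ha2 hc2 hS hU)
  linear_combination ht'


private lemma case_easy (d a c S U Q : ℝ) (hd0 : 0 ≤ d) (hd1 : d ≤ 1)
    (ha0 : 0 < a) (hc0 : 0 < c) (ha2 : a^2 = 1 - d) (hc2 : c^2 = 1 + d)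
    (hS : 0 ≤ S) (hU : 0 ≤ U) (hQ : 0 ≤ Q)
    (hcase : a*Q ≤ a*U^2 + d*S*U) :
    a^4*c^2*(Q+S^2) ≤ (a*S+c*U)^2 := by
  obtain ⟨hc1, hc2', ha1, hcd⟩ := basic_ac d a c hd0 hd1 ha0 hc0 ha2 hc2
  have k1 : a^3*c^2*(a*Q) ≤ a^3*c^2*(a*U^2 + d*S*U) :=
    mul_le_mul_of_nonneg_left hcase (by positivity)
  have ha4 : a^4 ≤ 1 := by nlinarith [ha1, ha0.le]
  have w1 : a^4*c^2*U^2 ≤ c^2*U^2 := by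
    have := mul_le_mul_of_nonneg_right ha4 (by positivity : (0:ℝ) ≤ c^2*U^2)
    nlinarith [this]
  have hacc : a^2*c^2 ≤ 1 := by nlinarith [ha2, hc2, sq_nonneg d]
  have w2 : a^4*c^2*S^2 ≤ a^2*S^2 := by
    have := mul_le_mul_of_nonneg_right hacc (by positivity : (0:ℝ) ≤ a^2*S^2)
    nlinarith [this]
  have w3 : a^3*c^2*(d*S*U) ≤ 2*a*c*S*U := by
    have q : (0:ℝ) ≤ a*c*S*U := by positivity
    have h2c : a^2*c*d ≤ 2 := by nlinarith [ha1, ha0.le, hc0.le]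
    nlinarith [q, h2c]
  nlinarith [k1, w1, w2, w3, sq_nonneg (a*S+c*U)]

private lemma scalar_main (δ P W S U X E : ℝ)
    (hδ0 : 0 ≤ δ) (hδ1 : δ < 1) (hP : 0 ≤ P) (hW : 0 ≤ W) (hS : 0 ≤ S)
    (hU : 0 ≤ U) (hX : 0 ≤ X) (hE : 0 ≤ E)
    (hWS : W ≤ S) (hEsq : E^2 = P^2 + W^2)
    (h1 : P^2 ≤ δ*P*E + X*U) (h2 : X^2 ≤ X*U + δ*P*W) (h3 : (1-δ)*P^2 ≤ X^2) :
    E ≤ 1/(Real.sqrt (1-δ) * Real.sqrt (1+δ)) * S + 1/(1-δ) * U := by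
  set a := Real.sqrt (1-δ) with ha
  set c := Real.sqrt (1+δ) with hc
  have ha2 : a^2 = 1 - δ := Real.sq_sqrt (by linarith)
  have hc2 : c^2 = 1 + δ := Real.sq_sqrt (by linarith)
  have ha0 : 0 < a := Real.sqrt_pos.2 (by linarith)
  have hc0 : 0 < c := Real.sqrt_pos.2 (by linarith)
  -- step 1 : a * X ≤ a * U + δ * S
  have hXb : a*X ≤ a*U + δ*S := by
    rcases eq_or_lt_of_le hX with h0 | hXpos
    · rw [← h0, mul_zero]
      positivity
    · have haP : a*P ≤ X := by
        have hsq : (a*P)^2 ≤ X^2 := by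
          have e : (a*P)^2 = (1-δ)*P^2 := by rw [mul_pow, ha2]
          linarith [h3]
        calc a*P = Real.sqrt ((a*P)^2) := (Real.sqrt_sq (by positivity)).symm
          _ ≤ Real.sqrt (X^2) := Real.sqrt_le_sqrt hsq
          _ = X := Real.sqrt_sq hX
      have key : X*(a*X) ≤ X*(a*U + δ*S) := by
        have k1 : a*X^2 ≤ a*(X*U) + δ*(a*P)*W := by
          calc a*X^2 ≤ a*(X*U + δ*P*W) := mul_le_mul_of_nonneg_left h2 ha0.le
            _ = a*(X*U) + δ*(a*P)*W := by ring
        have k2 : δ*(a*P)*W ≤ δ*X*S := by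
          have w1 : δ*(a*P)*W ≤ δ*X*W :=
            mul_le_mul_of_nonneg_right (mul_le_mul_of_nonneg_left haP hδ0) hW
          have w2 : δ*X*W ≤ δ*X*S :=
            mul_le_mul_of_nonneg_left hWS (by positivity)
          linarith
        nlinarith [k1, k2]
      exact le_of_mul_le_mul_left key hXpos
  -- step 2
  have h1a : a*P^2 ≤ a*δ*P*E + a*U^2 + δ*S*U := by
    have k3 : a*X*U ≤ a*U^2 + δ*S*U := by
      calc a*X*U = (a*X)*U := by ring
        _ ≤ (a*U + δ*S)*U := mul_le_mul_of_nonneg_right hXb hU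
        _ = a*U^2 + δ*S*U := by ring
    have k4 : a*P^2 ≤ a*(δ*P*E + X*U) := mul_le_mul_of_nonneg_left h1 ha0.le
    nlinarith [k3, k4]
  have hWsq : W^2 ≤ S^2 := pow_le_pow_left₀ hW hWS 2
  have hE2 : E^2 ≤ P^2 + S^2 := by linarith [hEsq, hWsq]
  -- main bound on squares
  have hgoal2 : a^4*c^2*(P^2+S^2) ≤ (a*S+c*U)^2 := by
    rcases le_or_gt (a*P^2) (a*U^2 + δ*S*U) with hcase | hcase
    · exact case_easy δ a c S U (P^2) hδ0 hδ1.le ha0 hc0 ha2 hc2 hS hU (sq_nonneg P) hcase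
    · have hpos : 0 < a*P^2 - (a*U^2 + δ*S*U) := by linarith
      have hup : a*P^2 - (a*U^2 + δ*S*U) ≤ a*δ*P*E := by linarith [h1a]
      have hsq : (a*P^2 - (a*U^2 + δ*S*U))^2 ≤ (a*δ*P*E)^2 :=
        pow_le_pow_left₀ hpos.le hup 2
      have hyp : (a*(P^2) - (a*U^2 + δ*S*U))^2 ≤ a^2*δ^2*(P^2)*((P^2)+S^2) := by
        have e1 : (a*δ*P*E)^2 = a^2*δ^2*P^2*E^2 := by ring
        have e2 : a^2*δ^2*P^2*E^2 ≤ a^2*δ^2*P^2*(P^2+S^2) :=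
          mul_le_mul_of_nonneg_left hE2 (by positivity)
        calc (a*(P^2) - (a*U^2 + δ*S*U))^2 ≤ (a*δ*P*E)^2 := hsq
          _ = a^2*δ^2*P^2*E^2 := e1
          _ ≤ a^2*δ^2*(P^2)*((P^2)+S^2) := e2
      exact poly_main δ a c S U (P^2) hδ0 hδ1.le ha0 hc0 ha2 hc2 hS hU (sq_nonneg P) hyp
  -- conclude
  have hRHSnn : 0 ≤ 1/(a*c) * S + 1/a^2 * U := by positivity
  have hfin2 : E^2 ≤ (1/(a*c) * S + 1/a^2 * U)^2 := by
    have hpc : (0:ℝ) < a^4*c^2 := by positivity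
    have hrw : (1/(a*c) * S + 1/a^2 * U)^2 * (a^4*c^2) = (a*S+c*U)^2 := by
      field_simp
    have hh : (P^2+S^2) * (a^4*c^2) ≤ (1/(a*c) * S + 1/a^2 * U)^2 * (a^4*c^2) := by
      rw [hrw]; linarith [hgoal2]
    have := le_of_mul_le_mul_right hh hpc
    linarith [hE2]
  have final : E ≤ 1/(a*c) * S + 1/a^2 * U := by
    calc E = Real.sqrt (E^2) := (Real.sqrt_sq hE).symm
      _ ≤ Real.sqrt ((1/(a*c) * S + 1/a^2 * U)^2) := Real.sqrt_le_sqrt hfin2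
      _ = 1/(a*c) * S + 1/a^2 * U := Real.sqrt_sq hRHSnn
  rw [ha2] at final
  exact final

-- dot product helpers
noncomputable def dotv {ι : Type*} [Fintype ι] (x y : ι → ℝ) : ℝ := ∑ i, x i * y i

lemma nsq_nonneg {ι : Type*} [Fintype ι] (x : ι → ℝ) : 0 ≤ nsq x :=
  Finset.sum_nonneg fun _ _ => sq_nonneg _

lemma n2_nonneg {ι : Type*} [Fintype ι] (x : ι → ℝ) : 0 ≤ n2 x := Real.sqrt_nonneg _

lemma n2_sq {ι : Type*} [Fintype ι] (x : ι → ℝ) : (n2 x)^2 = nsq x :=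
  Real.sq_sqrt (nsq_nonneg x)

lemma n2_mono {ι : Type*} [Fintype ι] {x y : ι → ℝ} (h : nsq x ≤ nsq y) : n2 x ≤ n2 y :=
  Real.sqrt_le_sqrt h

lemma dotv_self {ι : Type*} [Fintype ι] (x : ι → ℝ) : dotv x x = nsq x := by
  unfold dotv nsq
  exact Finset.sum_congr rfl fun i _ => (sq (x i)).symm

lemma dotv_CS {ι : Type*} [Fintype ι] (x y : ι → ℝ) : dotv x y ≤ n2 x * n2 y := by
  unfold dotv n2 nsq
  exact Real.sum_mul_le_sqrt_mul_sqrt _ _ _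

lemma nsq_neg {ι : Type*} [Fintype ι] (x : ι → ℝ) : nsq (-x) = nsq x := by
  unfold nsq
  exact Finset.sum_congr rfl fun i _ => by simp

lemma dotv_abs_le {ι : Type*} [Fintype ι] (x y : ι → ℝ) : |dotv x y| ≤ n2 x * n2 y := by
  rw [abs_le]
  constructor
  · have h := dotv_CS (-x) y
    have e : dotv (-x) y = -dotv x y := by
      unfold dotv
      rw [← Finset.sum_neg_distrib]
      exact Finset.sum_congr rfl fun i _ => by simp
    have e2 : n2 (-x) = n2 x := by unfold n2; rw [nsq_neg]
    rw [e, e2] at h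
    linarith
  · exact dotv_CS x y

lemma dotv_add_right {ι : Type*} [Fintype ι] (x y z : ι → ℝ) :
    dotv x (y + z) = dotv x y + dotv x z := by
  unfold dotv
  rw [← Finset.sum_add_distrib]
  exact Finset.sum_congr rfl fun i _ => by simp [Pi.add_apply]; ring

lemma nsq_eq_zero {ι : Type*} [Fintype ι] {x : ι → ℝ} (h : nsq x = 0) : x = 0 := by
  funext i
  have := (Finset.sum_eq_zero_iff_of_nonneg (fun i _ => sq_nonneg (x i))).1 h i (Finset.mem_univ i)
  simpa [pow_eq_zero_iff] using this

-- supp lemmas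
lemma mem_supp {n : ℕ} {x : Fin n → ℝ} {i : Fin n} : i ∈ supp x ↔ x i ≠ 0 := by
  simp [supp]

lemma supp_zero_of_not_mem {n : ℕ} {x : Fin n → ℝ} {i : Fin n} (h : i ∉ supp x) : x i = 0 := by
  by_contra hne
  exact h (mem_supp.2 hne)

lemma sparse_of_supp_subset {n q : ℕ} {x : Fin n → ℝ} {T : Finset (Fin n)}
    (h : supp x ⊆ T) (hT : T.card ≤ q) : Sparse q x :=
  le_trans (Finset.card_le_card h) hT

-- parallelogram facts
lemma nsq_add_expand {ι : Type*} [Fintype ι] (x y : ι → ℝ) :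
    nsq (x + y) = nsq x + 2 * dotv x y + nsq y := by
  unfold nsq dotv
  rw [Finset.mul_sum]
  rw [show (∑ i, x i ^2) + (∑ i, 2 * (x i * y i)) + (∑ i, y i ^2)
      = ∑ i, (x i ^2 + 2*(x i * y i) + y i ^2) by
    rw [Finset.sum_add_distrib, Finset.sum_add_distrib]]
  exact Finset.sum_congr rfl fun i _ => by simp [Pi.add_apply]; ring

lemma nsq_sub_expand {ι : Type*} [Fintype ι] (x y : ι → ℝ) :
    nsq (x - y) = nsq x - 2 * dotv x y + nsq y := by
  unfold nsq dotv
  rw [Finset.mul_sum]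
  rw [show (∑ i, x i ^2) - (∑ i, 2 * (x i * y i)) + (∑ i, y i ^2)
      = ∑ i, (x i ^2 - 2*(x i * y i) + y i ^2) by
    rw [Finset.sum_add_distrib, Finset.sum_sub_distrib]]
  exact Finset.sum_congr rfl fun i _ => by simp [Pi.sub_apply]; ring

lemma nsq_smul {ι : Type*} [Fintype ι] (r : ℝ) (x : ι → ℝ) : nsq (r • x) = r^2 * nsq x := by
  unfold nsq
  rw [Finset.mul_sum]
  exact Finset.sum_congr rfl fun i _ => by simp [Pi.smul_apply, smul_eq_mul]; ring

lemma dotv_smul_left {ι : Type*} [Fintype ι] (r : ℝ) (x y : ι → ℝ) :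
    dotv (r • x) y = r * dotv x y := by
  unfold dotv
  rw [Finset.mul_sum]
  exact Finset.sum_congr rfl fun i _ => by simp [Pi.smul_apply, smul_eq_mul]; ring

lemma dotv_smul_right {ι : Type*} [Fintype ι] (r : ℝ) (x y : ι → ℝ) :
    dotv x (r • y) = r * dotv x y := by
  unfold dotv
  rw [Finset.mul_sum]
  exact Finset.sum_congr rfl fun i _ => by simp [Pi.smul_apply, smul_eq_mul]; ring

lemma supp_add_subset {n : ℕ} (x y : Fin n → ℝ) : supp (x + y) ⊆ supp x ∪ supp y := by
  intro i hi
  rw [mem_supp] at hi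
  rw [Finset.mem_union, mem_supp, mem_supp]
  by_contra hc
  push_neg at hc
  exact hi (by simp [Pi.add_apply, hc.1, hc.2])

lemma supp_sub_subset {n : ℕ} (x y : Fin n → ℝ) : supp (x - y) ⊆ supp x ∪ supp y := by
  intro i hi
  rw [mem_supp] at hi
  rw [Finset.mem_union, mem_supp, mem_supp]
  by_contra hc
  push_neg at hc
  exact hi (by simp [Pi.sub_apply, hc.1, hc.2])

lemma supp_smul_subset {n : ℕ} (r : ℝ) (x : Fin n → ℝ) : supp (r • x) ⊆ supp x := by
  intro i hi
  rw [mem_supp] at hi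
  rw [mem_supp]
  intro h0
  exact hi (by simp [Pi.smul_apply, h0])

lemma dotv_zero_left {ι : Type*} [Fintype ι] (y : ι → ℝ) : dotv (0 : ι → ℝ) y = 0 := by
  unfold dotv; simp

lemma dotv_zero_right {ι : Type*} [Fintype ι] (y : ι → ℝ) : dotv y (0 : ι → ℝ) = 0 := by
  unfold dotv; simp

-- half cross bound
lemma cross_half {m n k : ℕ} (A : Matrix (Fin m) (Fin n) ℝ) (δ : ℝ)
    (hRIP : SatRIP A (2*k) δ) (T : Finset (Fin n)) (hT : T.card ≤ 2*k)
    (x y : Fin n → ℝ) (hx : supp x ⊆ T) (hy : supp y ⊆ T) :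
    |dotv (A.mulVec x) (A.mulVec y) - dotv x y| ≤ δ/2 * (nsq x + nsq y) := by
  have hsx : Sparse (2*k) (x + y) :=
    sparse_of_supp_subset (le_trans (supp_add_subset x y) (Finset.union_subset hx hy)) hT
  have hsy : Sparse (2*k) (x - y) :=
    sparse_of_supp_subset (le_trans (supp_sub_subset x y) (Finset.union_subset hx hy)) hT
  have h1 := hRIP _ hsx
  have h2 := hRIP _ hsy
  rw [Matrix.mulVec_add] at h1
  rw [Matrix.mulVec_sub] at h2
  have ea1 := nsq_add_expand (A.mulVec x) (A.mulVec y)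
  have ea2 := nsq_sub_expand (A.mulVec x) (A.mulVec y)
  have eb1 := nsq_add_expand x y
  have eb2 := nsq_sub_expand x y
  have b1 : nsq (A.mulVec x + A.mulVec y) ≤ (1+δ)*(nsq x + 2*dotv x y + nsq y) := by
    rw [← eb1]; exact h1.2
  have b2 : (1-δ)*(nsq x - 2*dotv x y + nsq y) ≤ nsq (A.mulVec x - A.mulVec y) := by
    rw [← eb2]; exact h2.1
  have b3 : nsq (A.mulVec x - A.mulVec y) ≤ (1+δ)*(nsq x - 2*dotv x y + nsq y) := by
    rw [← eb2]; exact h2.2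
  have b4 : (1-δ)*(nsq x + 2*dotv x y + nsq y) ≤ nsq (A.mulVec x + A.mulVec y) := by
    rw [← eb1]; exact h1.1
  rw [abs_le]
  constructor <;> linarith [ea1, ea2, b1, b2, b3, b4]

lemma cross_bound {m n k : ℕ} (A : Matrix (Fin m) (Fin n) ℝ) (δ : ℝ) (hδ0 : 0 ≤ δ)
    (hRIP : SatRIP A (2*k) δ) (T : Finset (Fin n)) (hT : T.card ≤ 2*k)
    (x y : Fin n → ℝ) (hx : supp x ⊆ T) (hy : supp y ⊆ T) :
    |dotv (A.mulVec x) (A.mulVec y) - dotv x y| ≤ δ * n2 x * n2 y := by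
  by_cases hx0 : nsq x = 0
  · have hz := nsq_eq_zero hx0
    subst hz
    rw [Matrix.mulVec_zero, dotv_zero_left, dotv_zero_left, sub_zero, abs_zero]
    exact mul_nonneg (mul_nonneg hδ0 (n2_nonneg _)) (n2_nonneg _)
  by_cases hy0 : nsq y = 0
  · have hz := nsq_eq_zero hy0
    subst hz
    rw [Matrix.mulVec_zero, dotv_zero_right, dotv_zero_right, sub_zero, abs_zero]
    exact mul_nonneg (mul_nonneg hδ0 (n2_nonneg _)) (n2_nonneg _)
  have hnx : 0 < nsq x := lt_of_le_of_ne (nsq_nonneg x) (Ne.symm hx0)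
  have hny : 0 < nsq y := lt_of_le_of_ne (nsq_nonneg y) (Ne.symm hy0)
  have h2x : 0 < n2 x := Real.sqrt_pos.2 hnx
  have h2y : 0 < n2 y := Real.sqrt_pos.2 hny
  set t := Real.sqrt (n2 y / n2 x) with hto
  have ht : 0 < t := Real.sqrt_pos.2 (div_pos h2y h2x)
  have ht2 : t^2 = n2 y / n2 x := Real.sq_sqrt (div_nonneg h2y.le h2x.le)
  have hc := cross_half A δ hRIP T hT (t • x) (t⁻¹ • y)
    (le_trans (supp_smul_subset _ _) hx) (le_trans (supp_smul_subset _ _) hy)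
  have e1 : dotv (A.mulVec (t • x)) (A.mulVec (t⁻¹ • y)) = dotv (A.mulVec x) (A.mulVec y) := by
    rw [Matrix.mulVec_smul, Matrix.mulVec_smul, dotv_smul_left, dotv_smul_right]
    rw [← mul_assoc, mul_inv_cancel₀ (ne_of_gt ht), one_mul]
  have e2 : dotv (t • x) (t⁻¹ • y) = dotv x y := by
    rw [dotv_smul_left, dotv_smul_right, ← mul_assoc, mul_inv_cancel₀ (ne_of_gt ht), one_mul]
  have e3 : δ/2 * (nsq (t • x) + nsq (t⁻¹ • y)) = δ * n2 x * n2 y := by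
    rw [nsq_smul, nsq_smul, ht2]
    have hti : (t⁻¹)^2 = n2 x / n2 y := by
      rw [inv_pow, ht2, inv_div]
    rw [hti, ← n2_sq x, ← n2_sq y]
    field_simp
    ring
  rw [e1, e2, e3] at hc
  exact hc


theorem stmt15 {m n : ℕ} (A : Matrix (Fin m) (Fin n) ℝ) (k : ℕ)
    (δ2k : ℝ) (hδ : IsRIC A (2 * k) δ2k) (hδlt : δ2k < 1)
    (h : Fin n → ℝ) (hh : Sparse k h) (y : Fin m → ℝ)
    (ν' : Fin m → ℝ) (hν' : ν' = y - A.mulVec h)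
    (v : Fin n → ℝ) (hv : Sparse k v)
    (xq : Fin n → ℝ) (hsupp : supp xq ⊆ supp v)
    (hls : restr (A.transpose.mulVec (y - A.mulVec xq)) (supp v) = 0) :
    n2 (h - xq) ≤ (1 / Real.sqrt (1 - δ2k ^ 2)) * n2 (h - v)
      + (1 / (1 - δ2k)) * n2 ν' := by
  classical
  obtain ⟨⟨hδ0, hRIP⟩, -⟩ := hδ
  set Γ : Finset (Fin n) := supp v with hΓ
  set e : Fin n → ℝ := h - xq with he
  set u : Fin n → ℝ := restr e Γ with hu
  set w : Fin n → ℝ := e - u with hw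
  have hui : ∀ i, u i = if i ∈ Γ then e i else 0 := fun i => rfl
  have hwi : ∀ i, w i = e i - u i := fun i => rfl
  have hei : ∀ i, e i = h i - xq i := fun i => rfl
  have hxq0 : ∀ i, i ∉ Γ → xq i = 0 := fun i hi =>
    supp_zero_of_not_mem (fun hm => hi (hsupp hm))
  have hv0 : ∀ i, i ∉ Γ → v i = 0 := fun i hi => supp_zero_of_not_mem hi
  -- supports
  have hsu : supp u ⊆ Γ := by
    intro i hi
    rw [mem_supp] at hi
    by_contra hni
    exact hi (by rw [hui i, if_neg hni])
  have hsw : supp w ⊆ supp h := by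
    intro i hi
    rw [mem_supp] at hi
    rw [mem_supp]
    intro hh0
    apply hi
    by_cases hiΓ : i ∈ Γ
    · rw [hwi i, hui i, if_pos hiΓ, sub_self]
    · rw [hwi i, hui i, if_neg hiΓ, sub_zero, hei i, hxq0 i hiΓ, hh0, sub_zero]
  have hse : supp e ⊆ supp h ∪ Γ := by
    intro i hi
    rw [mem_supp] at hi
    rw [Finset.mem_union, mem_supp]
    by_contra hc
    push_neg at hc
    exact hi (by rw [hei i, hc.1, hxq0 i hc.2, sub_zero])
  have hcardT : (supp h ∪ Γ).card ≤ 2*k :=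
    le_trans (Finset.card_union_le _ _) (by rw [two_mul]; exact Nat.add_le_add hh hv)
  have hsuT : supp u ⊆ supp h ∪ Γ := le_trans hsu Finset.subset_union_right
  have hswT : supp w ⊆ supp h ∪ Γ := le_trans hsw Finset.subset_union_left
  have hsp_u : Sparse (2*k) u := sparse_of_supp_subset hsuT hcardT
  -- pointwise sums
  have hsplit : nsq e = nsq u + nsq w := by
    unfold nsq
    rw [← Finset.sum_add_distrib]
    apply Finset.sum_congr rfl
    intro i _
    rw [hwi i, hui i]
    by_cases hiΓ : i ∈ Γ <;> simp [hiΓ]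
  have hdue : dotv u e = nsq u := by
    unfold dotv nsq
    apply Finset.sum_congr rfl
    intro i _
    rw [hui i]
    by_cases hiΓ : i ∈ Γ <;> simp [hiΓ, sq]
  have hduw : dotv u w = 0 := by
    unfold dotv
    apply Finset.sum_eq_zero
    intro i _
    rw [hui i, hwi i, hui i]
    by_cases hiΓ : i ∈ Γ <;> simp [hiΓ]
  have hwle : nsq w ≤ nsq (h - v) := by
    unfold nsq
    apply Finset.sum_le_sum
    intro i _
    rw [hwi i, hui i]
    by_cases hiΓ : i ∈ Γ
    · simp [hiΓ]
      positivity
    · rw [if_neg hiΓ, sub_zero, hei i, hxq0 i hiΓ, sub_zero]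
      have : (h - v) i = h i - v i := rfl
      rw [this, hv0 i hiΓ, sub_zero]
  -- orthogonality
  have horth : dotv (A.mulVec u) (y - A.mulVec xq) = 0 := by
    have hadj : dotv (A.mulVec u) (y - A.mulVec xq)
        = dotv u (A.transpose.mulVec (y - A.mulVec xq)) := by
      unfold dotv
      simp only [Matrix.mulVec, dotProduct, Matrix.transpose_apply,
        Finset.sum_mul, Finset.mul_sum]
      rw [Finset.sum_comm]
      apply Finset.sum_congr rfl
      intro i _
      apply Finset.sum_congr rfl
      intro j _
      ring
    rw [hadj]
    unfold dotv
    apply Finset.sum_eq_zero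
    intro i _
    by_cases hiΓ : i ∈ Γ
    · have hz := congrFun hls i
      have : restr (A.transpose.mulVec (y - A.mulVec xq)) Γ i
          = A.transpose.mulVec (y - A.mulVec xq) i := if_pos hiΓ
      rw [hΓ] at hiΓ
      have hz2 : A.transpose.mulVec (y - A.mulVec xq) i = 0 := by
        have : restr (A.transpose.mulVec (y - A.mulVec xq)) (supp v) i = 0 := by
          rw [hz]; rfl
        rwa [restr, if_pos hiΓ] at this
      rw [hz2, mul_zero]
    · rw [hui i, if_neg hiΓ, zero_mul]
  have hre : y - A.mulVec xq = A.mulVec e + ν' := by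
    rw [he, Matrix.mulVec_sub, hν']
    abel
  have hAe : dotv (A.mulVec u) (A.mulVec e) = - dotv (A.mulVec u) ν' := by
    have h0 := horth
    rw [hre, dotv_add_right] at h0
    linarith
  have heuw : e = u + w := by
    funext i
    rw [Pi.add_apply, hwi i]
    ring
  have hAeuw : A.mulVec e = A.mulVec u + A.mulVec w := by
    conv_lhs => rw [heuw]
    rw [Matrix.mulVec_add]
  -- cross bounds
  have hc1 := cross_bound A δ2k hδ0 hRIP (supp h ∪ Γ) hcardT u e hsuT hse
  have hc2 := cross_bound A δ2k hδ0 hRIP (supp h ∪ Γ) hcardT u w hsuT hswT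
  rw [hduw, sub_zero] at hc2
  have hcs := dotv_abs_le (A.mulVec u) ν'
  have a1 := abs_le.1 hc1
  have a2 := abs_le.1 hcs
  have a3 := abs_le.1 hc2
  -- scalar inequalities
  have ineq1 : (n2 u)^2 ≤ δ2k * (n2 u) * (n2 e) + (n2 (A.mulVec u)) * (n2 ν') := by
    rw [n2_sq, ← hdue]
    linarith [a1.1, a2.1, hAe]
  have ineq2 : (n2 (A.mulVec u))^2 ≤ (n2 (A.mulVec u)) * (n2 ν') + δ2k * (n2 u) * (n2 w) := by
    rw [n2_sq, ← dotv_self]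
    have e6 : dotv (A.mulVec u) (A.mulVec e)
        = dotv (A.mulVec u) (A.mulVec u) + dotv (A.mulVec u) (A.mulVec w) := by
      conv_lhs => rw [hAeuw]
      rw [dotv_add_right]
    linarith [a2.1, a3.2, hAe, e6]
  have ineq3 : (1 - δ2k) * (n2 u)^2 ≤ (n2 (A.mulVec u))^2 := by
    rw [n2_sq, n2_sq]
    exact (hRIP u hsp_u).1
  have ineq4 : n2 w ≤ n2 (h - v) := n2_mono hwle
  have ineq5 : (n2 e)^2 = (n2 u)^2 + (n2 w)^2 := by
    rw [n2_sq, n2_sq, n2_sq]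
    exact hsplit
  have final := scalar_main δ2k (n2 u) (n2 w) (n2 (h - v)) (n2 ν') (n2 (A.mulVec u)) (n2 e)
    hδ0 hδlt (n2_nonneg u) (n2_nonneg w) (n2_nonneg (h - v)) (n2_nonneg ν')
    (n2_nonneg (A.mulVec u)) (n2_nonneg e) ineq4 ineq5 ineq1 ineq2 ineq3
  have hsqrt : Real.sqrt (1 - δ2k^2) = Real.sqrt (1 - δ2k) * Real.sqrt (1 + δ2k) := by
    rw [show (1 - δ2k^2) = (1 - δ2k) * (1 + δ2k) by ring,
      Real.sqrt_mul (by linarith)]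
  rw [hsqrt]
  exact final
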